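/- The restriction T|_Q : Q → Q of the operator T to the space Q of even quartics is a linear bijection. -/

import Mathlib

open MeasureTheory Finset

noncomputable section

/-- Membership in `Q`: `f` is an even quartic
`f(x) = ∑ i j, a i j * x i^2 * x j^2` with symmetric coefficients. -/
def inQ (n : ℕ) (f : EuclideanSpace ℝ (Fin n) → ℝ) : Prop :=
  ∃ a : Fin n → Fin n → ℝ, (∀ i j, a i j = a j i) ∧
    ∀ x, f x = ∑ i, ∑ j, a i j * (x i)^2 * (x j)^2

/-- The operator `T` on degree-4 forms:
`(Tf)(x) = ∫_{S^{n-1}} f(v) (v·x)^4 dσ(v)`. -/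
def Tmap {n : ℕ} (σ : Measure (EuclideanSpace ℝ (Fin n)))
    (f : EuclideanSpace ℝ (Fin n) → ℝ) : EuclideanSpace ℝ (Fin n) → ℝ :=
  fun x => ∫ v, f v * (∑ i, v i * x i)^4 ∂σ

/-! ### Auxiliary material -/

section Aux

def sg {ι : Type*} [DecidableEq ι] (S : Finset ι) (k : ι) : ℝ := if k ∈ S then -1 else 1

lemma sg_sq {ι : Type*} [DecidableEq ι] (S : Finset ι) (k : ι) : sg S k * sg S k = 1 := by
  unfold sg; split <;> norm_num

lemma sg_sq' {ι : Type*} [DecidableEq ι] (S : Finset ι) (k : ι) : sg S k ^ 2 = 1 := by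
  unfold sg; split <;> norm_num

lemma sg_abs {ι : Type*} [DecidableEq ι] (S : Finset ι) (k : ι) : |sg S k| = 1 := by
  unfold sg; split <;> norm_num

lemma sg_sum_insert {ι : Type*} [DecidableEq ι] {s : Finset ι} {a : ι} (ha : a ∉ s)
    {S : Finset ι} (hS : a ∉ S) (t : ι → ℝ) :
    (∑ k ∈ insert a s, sg S k * t k) = t a + ∑ k ∈ s, sg S k * t k := by
  rw [Finset.sum_insert ha, sg, if_neg hS]; ring

lemma sg_sum_insert' {ι : Type*} [DecidableEq ι] {s : Finset ι} {a : ι} (ha : a ∉ s)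
    (S : Finset ι) (t : ι → ℝ) :
    (∑ k ∈ insert a s, sg (insert a S) k * t k) = -t a + ∑ k ∈ s, sg S k * t k := by
  rw [Finset.sum_insert ha]
  congr 1
  · simp [sg]
  · refine Finset.sum_congr rfl fun k hk => ?_
    have hka : k ≠ a := fun h => ha (h ▸ hk)
    simp [sg, Finset.mem_insert, hka]

lemma lemB {ι : Type*} [DecidableEq ι] (t : ι → ℝ) (s : Finset ι) :
    ∑ S ∈ s.powerset, (∑ k ∈ s, sg S k * t k)^2 = 2^s.card * ∑ k ∈ s, (t k)^2 := by
  induction s using Finset.induction_on with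
  | empty => simp
  | insert a s ha ih =>
    rw [Finset.sum_powerset_insert ha, Finset.card_insert_of_notMem ha,
      Finset.sum_insert (s := s) ha (f := fun k => (t k)^2), ← Finset.sum_add_distrib]
    have h1 : ∀ S ∈ s.powerset, (∑ k ∈ insert a s, sg S k * t k)^2
        + (∑ k ∈ insert a s, sg (insert a S) k * t k)^2
        = 2*(t a)^2 + 2*(∑ k ∈ s, sg S k * t k)^2 := by
      intro S hS
      rw [sg_sum_insert ha (fun h => ha (Finset.mem_powerset.mp hS h)), sg_sum_insert' ha S]
      ring
    rw [Finset.sum_congr rfl h1]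
    simp only [Finset.sum_add_distrib, Finset.sum_const, Finset.card_powerset, nsmul_eq_mul,
      ← Finset.mul_sum, ih]
    push_cast
    ring

lemma lemA {ι : Type*} [DecidableEq ι] (t : ι → ℝ) (s : Finset ι) :
    ∑ S ∈ s.powerset, (∑ k ∈ s, sg S k * t k)^4
      = 2^s.card * (3 * (∑ k ∈ s, (t k)^2)^2 - 2 * ∑ k ∈ s, (t k)^4) := by
  induction s using Finset.induction_on with
  | empty => simp
  | insert a s ha ih =>
    rw [Finset.sum_powerset_insert ha, Finset.card_insert_of_notMem ha,
      Finset.sum_insert (s := s) ha (f := fun k => (t k)^2),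
      Finset.sum_insert (s := s) ha (f := fun k => (t k)^4), ← Finset.sum_add_distrib]
    have h1 : ∀ S ∈ s.powerset, (∑ k ∈ insert a s, sg S k * t k)^4
        + (∑ k ∈ insert a s, sg (insert a S) k * t k)^4
        = 2*(t a)^4 + 12*(t a)^2*(∑ k ∈ s, sg S k * t k)^2 + 2*(∑ k ∈ s, sg S k * t k)^4 := by
      intro S hS
      rw [sg_sum_insert ha (fun h => ha (Finset.mem_powerset.mp hS h)), sg_sum_insert' ha S]
      ring
    rw [Finset.sum_congr rfl h1]
    simp only [Finset.sum_add_distrib, Finset.sum_const, Finset.card_powerset, nsmul_eq_mul,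
      ← Finset.mul_sum, ih, lemB]
    push_cast
    ring

variable {n : ℕ}

def flipIso (S : Finset (Fin n)) : EuclideanSpace ℝ (Fin n) ≃ₗᵢ[ℝ] EuclideanSpace ℝ (Fin n) where
  toLinearEquiv := LinearEquiv.ofInvolutive
    { toFun := fun v => WithLp.toLp 2 (fun k => sg S k * v k)
      map_add' := fun v w => by ext k; simp [PiLp.add_apply]; ring
      map_smul' := fun c v => by ext k; simp [PiLp.smul_apply, smul_eq_mul]; ring }
    (fun v => by ext k; simp only [LinearMap.coe_mk, AddHom.coe_mk, ← mul_assoc, sg_sq, one_mul])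
  norm_map' := fun v => by
    simp only [LinearEquiv.coe_mk, LinearEquiv.ofInvolutive]
    rw [EuclideanSpace.norm_eq, EuclideanSpace.norm_eq]
    congr 1
    refine Finset.sum_congr rfl fun k _ => ?_
    simp [Real.norm_eq_abs, abs_mul, sg_abs]

lemma flipIso_apply (S : Finset (Fin n)) (v : EuclideanSpace ℝ (Fin n)) (k : Fin n) :
    flipIso S v k = sg S k * v k := rfl

variable (σ : Measure (EuclideanSpace ℝ (Fin n))) [IsProbabilityMeasure σ]

lemma ae_sphere (hσsphere : σ (Metric.sphere (0 : EuclideanSpace ℝ (Fin n)) 1) = 1) :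
    ∀ᵐ v ∂σ, v ∈ Metric.sphere (0 : EuclideanSpace ℝ (Fin n)) 1 := by
  rw [MeasureTheory.ae_iff]
  have hm : MeasurableSet (Metric.sphere (0 : EuclideanSpace ℝ (Fin n)) 1) :=
    Metric.isClosed_sphere.measurableSet
  have h := measure_compl (μ := σ) hm (by simp [hσsphere])
  rw [measure_univ, hσsphere, tsub_self] at h
  exact h

lemma integrable_cont (hσsphere : σ (Metric.sphere (0 : EuclideanSpace ℝ (Fin n)) 1) = 1)
    {g : EuclideanSpace ℝ (Fin n) → ℝ} (hg : Continuous g) : Integrable g σ := by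
  obtain ⟨C, hC⟩ := (isCompact_sphere (0 : EuclideanSpace ℝ (Fin n)) 1).exists_bound_of_continuousOn
    hg.continuousOn
  exact Integrable.mono' (integrable_const C) hg.aestronglyMeasurable
    ((ae_sphere σ hσsphere).mono fun v hv => hC v hv)

omit [IsProbabilityMeasure σ] in
lemma integral_comp_iso
    (hσinv : ∀ O : EuclideanSpace ℝ (Fin n) ≃ₗᵢ[ℝ] EuclideanSpace ℝ (Fin n),
      Measure.map (⇑O) σ = σ)
    (O : EuclideanSpace ℝ (Fin n) ≃ₗᵢ[ℝ] EuclideanSpace ℝ (Fin n))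
    {h : EuclideanSpace ℝ (Fin n) → ℝ} (hh : Continuous h) :
    ∫ v, h (O v) ∂σ = ∫ v, h v ∂σ := by
  rw [← MeasureTheory.integral_map (O.continuous.aemeasurable)]
  · rw [hσinv O]
  · rw [hσinv O]; exact hh.aestronglyMeasurable

/-- the coefficients of `T f`. -/
def bco (σ : Measure (EuclideanSpace ℝ (Fin n))) (f : EuclideanSpace ℝ (Fin n) → ℝ)
    (k l : Fin n) : ℝ :=
  ∫ v, f v * (3 * (v k)^2 * (v l)^2 - (if k = l then 2*(v k)^4 else 0)) ∂σ

omit [IsProbabilityMeasure σ] in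
lemma bco_symm (f : EuclideanSpace ℝ (Fin n) → ℝ)
    (k l : Fin n) : bco σ f k l = bco σ f l k := by
  unfold bco
  congr 1; funext v
  by_cases h : k = l
  · subst h; simp
  · rw [if_neg h, if_neg (Ne.symm h)]; ring

lemma pointwise_expand (f : EuclideanSpace ℝ (Fin n) → ℝ) (x v : EuclideanSpace ℝ (Fin n)) :
    f v * (3*(∑ k, (v k * x k)^2)^2 - 2*∑ k, (v k * x k)^4)
      = ∑ k, ∑ l, f v * (3*(v k)^2*(v l)^2 - (if k = l then 2*(v k)^4 else 0))
          * ((x k)^2 * (x l)^2) := by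
  have e1 : (∑ k, (v k * x k)^2)^2 = ∑ k, ∑ l, (v k)^2*(v l)^2*((x k)^2*(x l)^2) := by
    rw [sq, Finset.sum_mul_sum]
    exact Finset.sum_congr rfl fun k _ => Finset.sum_congr rfl fun l _ => by ring
  have e2 : (∑ k, (v k * x k)^4) = ∑ k, ∑ l, (if k = l then (v k)^4*((x k)^2*(x l)^2) else 0) := by
    refine Finset.sum_congr rfl fun k _ => ?_
    rw [Finset.sum_ite_eq (Finset.univ) k (fun l => (v k)^4*((x k)^2*(x l)^2))]
    rw [if_pos (Finset.mem_univ k)]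
    ring
  have e3 : ∀ k l : Fin n, f v * (3*(v k)^2*(v l)^2 - (if k = l then 2*(v k)^4 else 0))
          * ((x k)^2 * (x l)^2)
      = 3 * f v * ((v k)^2*(v l)^2*((x k)^2*(x l)^2))
        - 2 * f v * (if k = l then (v k)^4*((x k)^2*(x l)^2) else 0) := by
    intro k l
    by_cases h : k = l
    · subst h; simp only [eq_self_iff_true, if_true]; ring
    · simp only [if_neg h]; ring
  calc f v * (3*(∑ k, (v k * x k)^2)^2 - 2*∑ k, (v k * x k)^4)
      = 3 * f v * ((∑ k, (v k * x k)^2)^2) - 2 * f v * (∑ k, (v k * x k)^4) := by ring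
    _ = ∑ k, ∑ l, (3 * f v * ((v k)^2*(v l)^2*((x k)^2*(x l)^2))
          - 2 * f v * (if k = l then (v k)^4*((x k)^2*(x l)^2) else 0)) := by
        rw [e1, e2]
        simp only [Finset.mul_sum, Finset.sum_sub_distrib]
    _ = ∑ k, ∑ l, f v * (3*(v k)^2*(v l)^2 - (if k = l then 2*(v k)^4 else 0))
          * ((x k)^2 * (x l)^2) :=
        (Finset.sum_congr rfl fun k _ => Finset.sum_congr rfl fun l _ => (e3 k l).symm)

lemma contQpoly (a : Fin n → Fin n → ℝ) {f : EuclideanSpace ℝ (Fin n) → ℝ}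
    (hf : ∀ x, f x = ∑ i, ∑ j, a i j * (x i)^2 * (x j)^2) : Continuous f := by
  have : f = fun x => ∑ i, ∑ j, a i j * (x i)^2 * (x j)^2 := funext hf
  rw [this]; fun_prop

/-- The fundamental representation: on `Q`, `T f` is again an even quartic with
coefficients `bco σ f`. -/
lemma Tmap_repr (hσsphere : σ (Metric.sphere (0 : EuclideanSpace ℝ (Fin n)) 1) = 1)
    (hσinv : ∀ O : EuclideanSpace ℝ (Fin n) ≃ₗᵢ[ℝ] EuclideanSpace ℝ (Fin n),
      Measure.map (⇑O) σ = σ)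
    {f : EuclideanSpace ℝ (Fin n) → ℝ} {a : Fin n → Fin n → ℝ}
    (hf : ∀ x, f x = ∑ i, ∑ j, a i j * (x i)^2 * (x j)^2)
    (x : EuclideanSpace ℝ (Fin n)) :
    Tmap σ f x = ∑ k, ∑ l, bco σ f k l * (x k)^2 * (x l)^2 := by
  have hfc : Continuous f := contQpoly a hf
  have hcont2 : ∀ k l : Fin n, Continuous fun v : EuclideanSpace ℝ (Fin n) =>
      f v * (3*(v k)^2*(v l)^2 - (if k = l then 2*(v k)^4 else 0)) * ((x k)^2*(x l)^2) := by
    intro k l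
    by_cases h : k = l
    · subst h
      simp only [eq_self_iff_true, if_true]
      fun_prop
    · simp only [if_neg h]
      fun_prop
  have h_flip : ∀ S : Finset (Fin n),
      ∫ v, f v * (∑ k, sg S k * (v k * x k))^4 ∂σ = Tmap σ f x := by
    intro S
    have hcont : Continuous fun w : EuclideanSpace ℝ (Fin n) => f w * (∑ i, w i * x i)^4 := by
      fun_prop
    have h2 := integral_comp_iso σ hσinv (flipIso S) hcont
    rw [show Tmap σ f x = ∫ v, f v * (∑ i, v i * x i)^4 ∂σ from rfl, ← h2]
    congr 1
    funext v
    have hfv : f (flipIso S v) = f v := by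
      rw [hf, hf]
      refine Finset.sum_congr rfl fun i _ => Finset.sum_congr rfl fun j _ => ?_
      simp [flipIso_apply, mul_pow, sg_sq']
    rw [hfv]
    congr 2
    exact Finset.sum_congr rfl fun k _ => by rw [flipIso_apply]; ring
  have hpow_ne : ((2:ℝ)^n) ≠ 0 := pow_ne_zero _ two_ne_zero
  calc Tmap σ f x
      = (2^n : ℝ)⁻¹ * ∑ S ∈ (Finset.univ : Finset (Fin n)).powerset,
          ∫ v, f v * (∑ k, sg S k * (v k * x k))^4 ∂σ := by
        rw [Finset.sum_congr rfl fun S _ => h_flip S, Finset.sum_const, Finset.card_powerset,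
          Finset.card_univ, Fintype.card_fin, nsmul_eq_mul]
        push_cast
        rw [← mul_assoc, inv_mul_cancel₀ hpow_ne, one_mul]
    _ = (2^n : ℝ)⁻¹ * ∫ v, ∑ S ∈ (Finset.univ : Finset (Fin n)).powerset,
          f v * (∑ k, sg S k * (v k * x k))^4 ∂σ := by
        rw [integral_finset_sum _ fun S _ => integrable_cont σ hσsphere (by fun_prop)]
    _ = ∫ v, f v * (3*(∑ k, (v k * x k)^2)^2 - 2*∑ k, (v k * x k)^4) ∂σ := by
        have hpt : ∀ v : EuclideanSpace ℝ (Fin n),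
            ∑ S ∈ (Finset.univ : Finset (Fin n)).powerset, f v * (∑ k, sg S k * (v k * x k))^4
            = 2^n * (f v * (3*(∑ k, (v k * x k)^2)^2 - 2*∑ k, (v k * x k)^4)) := by
          intro v
          rw [← Finset.mul_sum, lemA (fun k => v k * x k) Finset.univ, Finset.card_univ,
            Fintype.card_fin]
          ring
        simp only [hpt]
        rw [MeasureTheory.integral_const_mul, ← mul_assoc, inv_mul_cancel₀ hpow_ne, one_mul]
    _ = ∑ k, ∑ l, bco σ f k l * (x k)^2 * (x l)^2 := by
        simp only [pointwise_expand f x]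
        rw [integral_finset_sum _ fun k _ =>
          integrable_cont σ hσsphere (continuous_finset_sum _ fun l _ => hcont2 k l)]
        refine Finset.sum_congr rfl fun k _ => ?_
        rw [integral_finset_sum _ fun l _ => integrable_cont σ hσsphere (hcont2 k l)]
        refine Finset.sum_congr rfl fun l _ => ?_
        rw [MeasureTheory.integral_mul_const]
        rw [show bco σ f k l = ∫ v, f v * (3 * (v k)^2 * (v l)^2
          - (if k = l then 2*(v k)^4 else 0)) ∂σ from rfl]
        ring

lemma coeff_ext {b : Fin n → Fin n → ℝ} (hsym : ∀ k l, b k l = b l k)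
    (h : ∀ x : EuclideanSpace ℝ (Fin n), ∑ k, ∑ l, b k l * (x k)^2 * (x l)^2 = 0) :
    ∀ k l, b k l = 0 := by
  have hdiag : ∀ p, b p p = 0 := by
    intro p
    have := h (EuclideanSpace.single p 1)
    simpa [EuclideanSpace.single_apply, ite_pow, mul_ite, ite_mul,
      Finset.sum_ite_eq', Finset.sum_ite_eq] using this
  intro k l
  by_cases hkl : k = l
  · subst hkl; exact hdiag k
  · have hx := h (EuclideanSpace.single k 1 + EuclideanSpace.single l 1)
    have hcoord : ∀ m, ((EuclideanSpace.single k 1 + EuclideanSpace.single l 1 :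
        EuclideanSpace ℝ (Fin n)) m)^2
        = (if m = k then 1 else 0) + (if m = l then 1 else 0) := by
      intro m
      rw [PiLp.add_apply, EuclideanSpace.single_apply, EuclideanSpace.single_apply]
      by_cases h1 : m = k
      · have h2 : ¬ m = l := by rw [h1]; exact hkl
        simp [h1, h2, hkl, Ne.symm hkl]
      · by_cases h2 : m = l <;> simp [h1, h2, hkl, Ne.symm hkl]
    simp only [hcoord, mul_add, add_mul, mul_ite, ite_mul, mul_zero, zero_mul, mul_one,
      Finset.sum_add_distrib, Finset.sum_ite_eq', Finset.mem_univ, if_true] at hx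
    have h1 := hdiag k
    have h2 := hdiag l
    have h3 := hsym k l
    linarith

omit [IsProbabilityMeasure σ] in
lemma zero_on_sphere
    (hσsphere : σ (Metric.sphere (0 : EuclideanSpace ℝ (Fin n)) 1) = 1)
    (hσinv : ∀ O : EuclideanSpace ℝ (Fin n) ≃ₗᵢ[ℝ] EuclideanSpace ℝ (Fin n),
      Measure.map (⇑O) σ = σ)
    {h : EuclideanSpace ℝ (Fin n) → ℝ} (hc : Continuous h)
    (hae : ∀ᵐ v ∂σ, h v = 0) :
    ∀ w ∈ Metric.sphere (0 : EuclideanSpace ℝ (Fin n)) 1, h w = 0 := by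
  by_contra hcon
  push_neg at hcon
  obtain ⟨w, hw, hw0⟩ := hcon
  set U : Set (EuclideanSpace ℝ (Fin n)) := {v | h v ≠ 0} with hUdef
  have hU : IsOpen U := isOpen_ne.preimage hc
  have hUm : σ U = 0 := by
    rw [MeasureTheory.ae_iff] at hae
    exact hae
  have hwnorm : ‖w‖ = 1 := mem_sphere_zero_iff_norm.mp hw
  have hrefl : ∀ u : EuclideanSpace ℝ (Fin n),
      ∃ O : EuclideanSpace ℝ (Fin n) ≃ₗᵢ[ℝ] EuclideanSpace ℝ (Fin n),
        u ∈ Metric.sphere (0 : EuclideanSpace ℝ (Fin n)) 1 → O w = u := by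
    intro u
    by_cases hu : u ∈ Metric.sphere (0 : EuclideanSpace ℝ (Fin n)) 1
    · have hunorm : ‖u‖ = 1 := mem_sphere_zero_iff_norm.mp hu
      exact ⟨Submodule.reflection (Submodule.span ℝ {w - u})ᗮ,
        fun _ => Submodule.reflection_sub (by rw [hwnorm, hunorm])⟩
    · exact ⟨LinearIsometryEquiv.refl ℝ _, fun h => absurd h hu⟩
  choose O hO using hrefl
  have hcov : Metric.sphere (0 : EuclideanSpace ℝ (Fin n)) 1
      ⊆ ⋃ u : EuclideanSpace ℝ (Fin n), (O u) '' U := by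
    intro u hu
    exact Set.mem_iUnion.mpr ⟨u, ⟨w, hw0, hO u hu⟩⟩
  obtain ⟨t, ht⟩ := (isCompact_sphere (0 : EuclideanSpace ℝ (Fin n)) 1).elim_finite_subcover
    (fun u => (O u) '' U)
    (fun u => (O u).toHomeomorph.isOpenMap U hU) hcov
  have himg : ∀ u, σ ((O u) '' U) = 0 := by
    intro u
    have hmeas : MeasurableSet ((O u) '' U) :=
      ((O u).toHomeomorph.isOpenMap U hU).measurableSet
    have heq : σ ((O u) '' U) = (Measure.map (⇑(O u)) σ) ((O u) '' U) := by
      rw [hσinv]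
    rw [heq, Measure.map_apply (O u).continuous.measurable hmeas,
      Set.preimage_image_eq U (O u).injective, hUm]
  have hle : σ (Metric.sphere (0 : EuclideanSpace ℝ (Fin n)) 1) ≤ ∑ u ∈ t, σ ((O u) '' U) :=
    le_trans (measure_mono ht) (measure_biUnion_finset_le t _)
  rw [hσsphere] at hle
  simp only [himg, Finset.sum_const_zero] at hle
  exact absurd hle (by norm_num)

lemma zero_everywhere {d : Fin n → Fin n → ℝ} {h : EuclideanSpace ℝ (Fin n) → ℝ}
    (hh : ∀ x, h x = ∑ i, ∑ j, d i j * (x i)^2 * (x j)^2)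
    (hs : ∀ w ∈ Metric.sphere (0 : EuclideanSpace ℝ (Fin n)) 1, h w = 0) (x) : h x = 0 := by
  by_cases hx0 : x = 0
  · subst hx0
    rw [hh]
    simp
  · have hxn : ‖x‖ ≠ 0 := norm_ne_zero_iff.mpr hx0
    set u : EuclideanSpace ℝ (Fin n) := ‖x‖⁻¹ • x with hu
    have hus : u ∈ Metric.sphere (0 : EuclideanSpace ℝ (Fin n)) 1 := by
      rw [mem_sphere_zero_iff_norm, hu, norm_smul, norm_inv, norm_norm,
        inv_mul_cancel₀ hxn]
    have h0 := hs u hus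
    rw [hh] at h0
    have hexp : ∀ i j : Fin n, d i j * (u i)^2 * (u j)^2
        = (‖x‖⁻¹)^4 * (d i j * (x i)^2 * (x j)^2) := by
      intro i j
      rw [hu, PiLp.smul_apply, PiLp.smul_apply, smul_eq_mul, smul_eq_mul]
      ring
    rw [Finset.sum_congr rfl fun i _ => Finset.sum_congr rfl fun j _ => hexp i j] at h0
    simp only [← Finset.mul_sum] at h0
    rcases mul_eq_zero.mp h0 with h1 | h2
    · exact absurd h1 (pow_ne_zero _ (inv_ne_zero hxn))
    · rw [hh]; exact h2

/-- Core injectivity statement: a member of `Q` with `T f = 0` vanishes identically. -/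
lemma Tzero_imp_zero (hσsphere : σ (Metric.sphere (0 : EuclideanSpace ℝ (Fin n)) 1) = 1)
    (hσinv : ∀ O : EuclideanSpace ℝ (Fin n) ≃ₗᵢ[ℝ] EuclideanSpace ℝ (Fin n),
      Measure.map (⇑O) σ = σ)
    {f : EuclideanSpace ℝ (Fin n) → ℝ} {a : Fin n → Fin n → ℝ}
    (hf : ∀ x, f x = ∑ i, ∑ j, a i j * (x i)^2 * (x j)^2)
    (hT : ∀ x, Tmap σ f x = 0) : ∀ x, f x = 0 := by
  have hfc : Continuous f := contQpoly a hf
  have hb : ∀ k l, bco σ f k l = 0 :=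
    coeff_ext (bco_symm σ f)
      (fun x => by rw [← Tmap_repr σ hσsphere hσinv hf x]; exact hT x)
  have hc : ∀ k l, ∫ v, f v * ((v k)^2 * (v l)^2) ∂σ = 0 := by
    intro k l
    by_cases hkl : k = l
    · subst hkl
      have hkk := hb k k
      unfold bco at hkk
      rw [show (fun v : EuclideanSpace ℝ (Fin n) =>
          f v * (3 * (v k)^2 * (v k)^2 - if k = k then 2*(v k)^4 else 0))
          = fun v => f v * ((v k)^2*(v k)^2) from funext fun v => by
            rw [if_pos rfl]; ring] at hkk
      exact hkk
    · have hkl2 := hb k l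
      unfold bco at hkl2
      rw [show (fun v : EuclideanSpace ℝ (Fin n) =>
          f v * (3 * (v k)^2 * (v l)^2 - if k = l then 2*(v k)^4 else 0))
          = fun v => 3 * (f v * ((v k)^2*(v l)^2)) from funext fun v => by
            rw [if_neg hkl]; ring, MeasureTheory.integral_const_mul] at hkl2
      linarith
  have hsq : ∫ v, f v * f v ∂σ = 0 := by
    have hpt : (fun v : EuclideanSpace ℝ (Fin n) => f v * f v)
        = fun v => ∑ i, ∑ j, a i j * (f v * ((v i)^2 * (v j)^2)) := by
      funext v
      calc f v * f v = (∑ i, ∑ j, a i j * (v i)^2 * (v j)^2) * f v := by rw [← hf v]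
        _ = ∑ i, ∑ j, a i j * (f v * ((v i)^2 * (v j)^2)) := by
            rw [Finset.sum_mul]
            refine Finset.sum_congr rfl fun i _ => ?_
            rw [Finset.sum_mul]
            exact Finset.sum_congr rfl fun j _ => by ring
    rw [hpt]
    rw [integral_finset_sum _ fun i _ => integrable_cont σ hσsphere
      (continuous_finset_sum _ fun j _ => by fun_prop)]
    rw [Finset.sum_congr rfl fun i (_ : i ∈ Finset.univ) =>
      integral_finset_sum Finset.univ fun j _ => integrable_cont σ hσsphere (by fun_prop)]
    rw [Finset.sum_congr rfl fun i (_ : i ∈ Finset.univ) => Finset.sum_congr rfl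
      fun j (_ : j ∈ Finset.univ) => MeasureTheory.integral_const_mul (a i j) _]
    simp only [hc, mul_zero, Finset.sum_const_zero]
  have hnn : (0 : EuclideanSpace ℝ (Fin n) → ℝ) ≤ fun v => f v * f v :=
    fun v => mul_self_nonneg (f v)
  have hint : Integrable (fun v => f v * f v) σ := integrable_cont σ hσsphere (by fun_prop)
  have hae2 := (MeasureTheory.integral_eq_zero_iff_of_nonneg hnn hint).mp hsq
  have hae : ∀ᵐ v ∂σ, f v = 0 := by
    filter_upwards [hae2] with v hv
    exact mul_self_eq_zero.mp (by simpa using hv)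
  exact zero_everywhere hf (zero_on_sphere σ hσsphere hσinv hfc hae)

/-- The coefficients-to-quartics linear map. -/
def Phi (n : ℕ) : (Fin n → Fin n → ℝ) →ₗ[ℝ] (EuclideanSpace ℝ (Fin n) → ℝ) where
  toFun a := fun x => ∑ i, ∑ j, a i j * (x i)^2 * (x j)^2
  map_add' a b := by
    funext x
    show _ = (fun x => ∑ i, ∑ j, a i j * (x i)^2 * (x j)^2) x
      + (fun x => ∑ i, ∑ j, b i j * (x i)^2 * (x j)^2) x
    rw [← Finset.sum_add_distrib]
    refine Finset.sum_congr rfl fun i _ => ?_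
    rw [← Finset.sum_add_distrib]
    refine Finset.sum_congr rfl fun j _ => ?_
    simp only [Pi.add_apply]
    ring
  map_smul' c a := by
    funext x
    show (∑ i, ∑ j, (c • a) i j * (x i)^2 * (x j)^2) = c * ∑ i, ∑ j, a i j * (x i)^2 * (x j)^2
    rw [Finset.mul_sum]
    refine Finset.sum_congr rfl fun i _ => ?_
    rw [Finset.mul_sum]
    refine Finset.sum_congr rfl fun j _ => ?_
    simp only [Pi.smul_apply, smul_eq_mul]
    ring

lemma inQ_iff_mem_range {f : EuclideanSpace ℝ (Fin n) → ℝ} :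
    inQ n f ↔ f ∈ LinearMap.range (Phi n) := by
  constructor
  · rintro ⟨a, _, hf⟩
    exact ⟨a, (funext hf).symm⟩
  · rintro ⟨a, ha⟩
    refine ⟨fun i j => (a i j + a j i)/2, fun i j => by ring, fun x => ?_⟩
    have hf : f x = ∑ i, ∑ j, a i j * (x i)^2 * (x j)^2 := by rw [← ha]; rfl
    have hswap : (∑ i, ∑ j, a j i * (x i)^2*(x j)^2)
        = ∑ i, ∑ j, a i j * (x i)^2*(x j)^2 := by
      rw [Finset.sum_comm]
      exact Finset.sum_congr rfl fun i _ => Finset.sum_congr rfl fun j _ => by ring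
    rw [hf]
    have : ∀ i j : Fin n, (a i j + a j i)/2 * (x i)^2 * (x j)^2
        = (a i j * (x i)^2 * (x j)^2)/2 + (a j i * (x i)^2 * (x j)^2)/2 := by
      intro i j; ring
    rw [Finset.sum_congr rfl fun i _ => Finset.sum_congr rfl fun j _ => this i j]
    simp only [Finset.sum_add_distrib, ← Finset.sum_div, hswap]
    ring

lemma cont_of_inQ {f : EuclideanSpace ℝ (Fin n) → ℝ} (hf : inQ n f) : Continuous f := by
  obtain ⟨a, _, hfa⟩ := hf
  exact contQpoly a hfa

lemma Tmap_add_pt (hσsphere : σ (Metric.sphere (0 : EuclideanSpace ℝ (Fin n)) 1) = 1)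
    {f g : EuclideanSpace ℝ (Fin n) → ℝ} (hfc : Continuous f) (hgc : Continuous g)
    (x : EuclideanSpace ℝ (Fin n)) :
    Tmap σ (fun y => f y + g y) x = Tmap σ f x + Tmap σ g x := by
  show ∫ v, (f v + g v) * (∑ i, v i * x i)^4 ∂σ = _
  rw [show (fun v : EuclideanSpace ℝ (Fin n) => (f v + g v) * (∑ i, v i * x i)^4)
      = fun v => f v * (∑ i, v i * x i)^4 + g v * (∑ i, v i * x i)^4 from
    funext fun v => by ring]
  exact MeasureTheory.integral_add (integrable_cont σ hσsphere (by fun_prop))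
    (integrable_cont σ hσsphere (by fun_prop))

lemma Tmap_smul_pt {f : EuclideanSpace ℝ (Fin n) → ℝ} (c : ℝ)
    (x : EuclideanSpace ℝ (Fin n)) :
    Tmap σ (fun y => c * f y) x = c * Tmap σ f x := by
  show ∫ v, (c * f v) * (∑ i, v i * x i)^4 ∂σ = _
  rw [show (fun v : EuclideanSpace ℝ (Fin n) => (c * f v) * (∑ i, v i * x i)^4)
      = fun v => c * (f v * (∑ i, v i * x i)^4) from funext fun v => by ring]
  exact MeasureTheory.integral_const_mul c _

end Aux

/-- The restriction `T|_Q : Q → Q` is a linear bijection: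
`T` maps `Q` bijectively onto `Q`, and it is linear on `Q`. -/
theorem stmt8 (n : ℕ) (hn : 1 ≤ n)
    (σ : Measure (EuclideanSpace ℝ (Fin n)))
    (hσprob : IsProbabilityMeasure σ)
    (hσsphere : σ (Metric.sphere (0 : EuclideanSpace ℝ (Fin n)) 1) = 1)
    (hσinv : ∀ O : EuclideanSpace ℝ (Fin n) ≃ₗᵢ[ℝ] EuclideanSpace ℝ (Fin n),
      Measure.map (⇑O) σ = σ) :
    Set.BijOn (Tmap σ) {f | inQ n f} {f | inQ n f} ∧
    (∀ f ∈ {f | inQ n f}, ∀ g ∈ {f | inQ n f}, ∀ c : ℝ,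
      Tmap σ (fun x => c * f x + g x) = fun x => c * Tmap σ f x + Tmap σ g x) := by
  haveI := hσprob
  -- `T` maps `Q` to `Q`
  have hmaps : ∀ f : EuclideanSpace ℝ (Fin n) → ℝ, inQ n f → inQ n (Tmap σ f) := by
    rintro f ⟨a, hsym, hf⟩
    exact ⟨bco σ f, bco_symm σ f, Tmap_repr σ hσsphere hσinv hf⟩
  -- linearity of `T` on continuous functions
  have hlin : ∀ f g : EuclideanSpace ℝ (Fin n) → ℝ, Continuous f → Continuous g → ∀ c : ℝ,
      Tmap σ (fun x => c * f x + g x) = fun x => c * Tmap σ f x + Tmap σ g x := by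
    intro f g hfc hgc c
    funext x
    have h1 := Tmap_add_pt σ hσsphere (f := fun y => c * f y) (g := g)
      (by fun_prop) hgc x
    rw [h1, Tmap_smul_pt σ c x]
  -- injectivity on `Q`
  have hinj : ∀ f : EuclideanSpace ℝ (Fin n) → ℝ, inQ n f → ∀ g, inQ n g →
      Tmap σ f = Tmap σ g → f = g := by
    rintro f ⟨af, hafs, haf⟩ g ⟨ag, hags, hag⟩ heq
    have hd : ∀ x, (fun y => f y - g y) x
        = ∑ i, ∑ j, (af i j - ag i j) * (x i)^2 * (x j)^2 := by
      intro x
      simp only [haf x, hag x, ← Finset.sum_sub_distrib]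
      exact Finset.sum_congr rfl fun i _ => Finset.sum_congr rfl fun j _ => by ring
    have hfc : Continuous f := contQpoly af haf
    have hgc : Continuous g := contQpoly ag hag
    have hT0 : ∀ x, Tmap σ (fun y => f y - g y) x = 0 := by
      intro x
      have : Tmap σ (fun y => f y - g y) x = Tmap σ f x - Tmap σ g x := by
        show ∫ v, (f v - g v) * (∑ i, v i * x i)^4 ∂σ = _
        rw [show (fun v : EuclideanSpace ℝ (Fin n) => (f v - g v) * (∑ i, v i * x i)^4)
            = fun v => f v * (∑ i, v i * x i)^4 - g v * (∑ i, v i * x i)^4 from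
          funext fun v => by ring]
        exact MeasureTheory.integral_sub (integrable_cont σ hσsphere (by fun_prop))
          (integrable_cont σ hσsphere (by fun_prop))
      rw [this, heq, sub_self]
    have hzero := Tzero_imp_zero σ hσsphere hσinv hd hT0
    funext x
    have := hzero x
    simpa [sub_eq_zero] using this
  -- surjectivity via finite-dimensional linear algebra
  have hQrange : {f : EuclideanSpace ℝ (Fin n) → ℝ | inQ n f}
      = ↑(LinearMap.range (Phi n)) := Set.ext fun f => inQ_iff_mem_range
  have hmaps' : ∀ u : LinearMap.range (Phi n), Tmap σ u.1 ∈ LinearMap.range (Phi n) :=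
    fun u => inQ_iff_mem_range.mp (hmaps u.1 (inQ_iff_mem_range.mpr u.2))
  let TQ : LinearMap.range (Phi n) →ₗ[ℝ] LinearMap.range (Phi n) :=
    { toFun := fun u => ⟨Tmap σ u.1, hmaps' u⟩
      map_add' := by
        intro u w
        apply Subtype.ext
        have hcu : Continuous (u.1 : EuclideanSpace ℝ (Fin n) → ℝ) :=
          cont_of_inQ (inQ_iff_mem_range.mpr u.2)
        have hcw : Continuous (w.1 : EuclideanSpace ℝ (Fin n) → ℝ) :=
          cont_of_inQ (inQ_iff_mem_range.mpr w.2)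
        show Tmap σ ((u + w : LinearMap.range (Phi n)) : EuclideanSpace ℝ (Fin n) → ℝ)
          = Tmap σ u.1 + Tmap σ w.1
        funext x
        have : ((u + w : LinearMap.range (Phi n)) : EuclideanSpace ℝ (Fin n) → ℝ)
            = fun y => u.1 y + w.1 y := rfl
        rw [this, Tmap_add_pt σ hσsphere hcu hcw x]
        rfl
      map_smul' := by
        intro c u
        apply Subtype.ext
        show Tmap σ ((c • u : LinearMap.range (Phi n)) : EuclideanSpace ℝ (Fin n) → ℝ)
          = c • Tmap σ u.1
        funext x
        have : ((c • u : LinearMap.range (Phi n)) : EuclideanSpace ℝ (Fin n) → ℝ)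
            = fun y => c * u.1 y := rfl
        rw [this, Tmap_smul_pt σ c x]
        rfl }
  have hTQinj : Function.Injective TQ := by
    rw [injective_iff_map_eq_zero]
    intro u hu
    obtain ⟨a, hsym, ha⟩ := inQ_iff_mem_range.mpr u.2
    have hT0 : ∀ x, Tmap σ u.1 x = 0 := by
      intro x
      have := congrArg Subtype.val hu
      exact congrFun this x
    have := Tzero_imp_zero σ hσsphere hσinv ha hT0
    exact Subtype.ext (funext this)
  haveI : FiniteDimensional ℝ (LinearMap.range (Phi n)) := inferInstance
  have hTQsurj : Function.Surjective TQ := LinearMap.injective_iff_surjective.mp hTQinj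
  refine ⟨⟨fun f hf => hmaps f hf, fun f hf g hg heq => hinj f hf g hg heq, ?_⟩,
    fun f hf g hg c => hlin f g (cont_of_inQ hf) (cont_of_inQ hg) c⟩
  intro g hg
  obtain ⟨u, hu⟩ := hTQsurj ⟨g, inQ_iff_mem_range.mp hg⟩
  refine ⟨u.1, inQ_iff_mem_range.mpr u.2, ?_⟩
  exact congrArg Subtype.val hu
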